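/- Comparison of non-reversible and symmetrized capacities: there exists a constant C₀ > 0, depending only on S, r and m, such that for every N ≥ 1 and all disjoint nonempty 𝒜, ℬ ⊆ H_N one has cap_N^s(𝒜,ℬ) ≤ cap_N(𝒜,ℬ) ≤ C₀ · cap_N^s(𝒜,ℬ). -/

import Mathlib

open Filter Topology Finset
open scoped Classical

noncomputable section

/-- `a(n)`: `a(0)=1`, `a(n)=n^α` for `n ≥ 1`. -/
def aZR (α : ℝ) (n : ℕ) : ℝ := if n = 0 then 1 else (n : ℝ) ^ α

/-- `g(0)=0`, `g(n)=a(n)/a(n-1)` for `n ≥ 1`. -/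
def gZR (α : ℝ) (n : ℕ) : ℝ := if n = 0 then 0 else aZR α n / aZR α (n - 1)

/-- The set of configurations of `N` particles on `S`. -/
def configs (S : Type*) [Fintype S] (N : ℕ) : Finset (S → ℕ) :=
  (Fintype.piFinset fun _ : S => Finset.range (N + 1)).filter fun η => ∑ x, η x = N

/-- `σ^{x,y} η`: move one particle from `x` to `y` (identity if `x = y` or `η x = 0`). -/
def move {S : Type*} (x y : S) (η : S → ℕ) : S → ℕ :=
  if x = y ∨ η x = 0 then η
  else Function.update (Function.update η x (η x - 1)) y (η y + 1)

/-- The zero-range generator with jump rates `r`. -/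
def LgenR {S : Type*} [Fintype S] (α : ℝ) (r : S → S → ℝ)
    (f : (S → ℕ) → ℝ) (η : S → ℕ) : ℝ :=
  ∑ x, ∑ y, gZR α (η x) * r x y * (f (move x y η) - f η)

/-- The Dirichlet form of the zero-range process. -/
def DirN {S : Type*} [Fintype S] (α : ℝ) (r : S → S → ℝ)
    (μ : (S → ℕ) → ℝ) (N : ℕ) (f : (S → ℕ) → ℝ) : ℝ :=
  (1 / 2) * ∑ η ∈ configs S N, ∑ x, ∑ y,
    μ η * gZR α (η x) * r x y * (f (move x y η) - f η) ^ 2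

section ZRAux
open Finset
variable {S : Type*} [Fintype S] [DecidableEq S]

lemma aZR_pos (α : ℝ) (n : ℕ) : 0 < aZR α n := by
  unfold aZR; split
  · norm_num
  · exact Real.rpow_pos_of_pos (by exact_mod_cast Nat.pos_of_ne_zero ‹_›) _

lemma gZR_nonneg (α : ℝ) (n : ℕ) : 0 ≤ gZR α n := by
  unfold gZR; split
  · exact le_refl _
  · exact le_of_lt (div_pos (aZR_pos _ _) (aZR_pos _ _))

lemma gZR_succ (α : ℝ) (n : ℕ) : gZR α (n+1) = aZR α (n+1) / aZR α n := by
  simp [gZR]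

lemma mem_configs {N : ℕ} {η : S → ℕ} :
    η ∈ configs S N ↔ ∑ x, η x = N := by
  classical
  simp only [configs, mem_filter, Fintype.mem_piFinset, mem_range]
  constructor
  · exact fun h => h.2
  · intro h
    refine ⟨fun x => ?_, h⟩
    have := Finset.single_le_sum (f := η) (fun i _ => Nat.zero_le _) (mem_univ x)
    omega

/-- add one particle at x -/
def adds (x : S) (ζ : S → ℕ) : S → ℕ := Function.update ζ x (ζ x + 1)

lemma adds_apply_same (x : S) (ζ : S → ℕ) : adds x ζ x = ζ x + 1 :=
  Function.update_self _ _ _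

lemma adds_apply_ne {x u : S} (ζ : S → ℕ) (h : u ≠ x) : adds x ζ u = ζ u :=
  Function.update_of_ne h _ _

lemma sum_adds (x : S) (ζ : S → ℕ) :
    ∑ u, adds x ζ u = (∑ u, ζ u) + 1 := by
  classical
  rw [adds, Finset.sum_update_of_mem (mem_univ x)]
  rw [← Finset.add_sum_erase _ ζ (mem_univ x), Finset.erase_eq]
  ring

lemma move_adds {x y : S} (hxy : x ≠ y) (ζ : S → ℕ) :
    move x y (adds x ζ) = adds y ζ := by
  funext u
  by_cases h1 : u = y <;> by_cases h2 : u = x <;>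
    simp [move, adds, hxy, h1, h2, Function.update_apply, hxy.symm]

lemma adds_mem_configs {N : ℕ} {ζ : S → ℕ} (hζ : ζ ∈ configs S (N-1)) (hN : 1 ≤ N)
    (x : S) : adds x ζ ∈ configs S N := by
  rw [mem_configs] at hζ ⊢
  rw [sum_adds, hζ]
  omega

lemma prod_adds (φ : ℕ → ℝ) (x : S) (ζ : S → ℕ) :
    (∏ u, φ (adds x ζ u)) * φ (ζ x) = φ (ζ x + 1) * ∏ u, φ (ζ u) := by
  rw [← Finset.mul_prod_erase univ (fun u => φ (adds x ζ u)) (mem_univ x),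
      ← Finset.mul_prod_erase univ (fun u => φ (ζ u)) (mem_univ x)]
  have h2 : ∀ u ∈ univ.erase x, φ (adds x ζ u) = φ (ζ u) :=
    fun u hu => by rw [adds_apply_ne ζ (Finset.ne_of_mem_erase hu)]
  rw [Finset.prod_congr rfl h2, adds_apply_same]
  ring

lemma prod_pow_adds (ms : S → ℝ) (x : S) (ζ : S → ℕ) :
    ∏ u, ms u ^ adds x ζ u = ms x * ∏ u, ms u ^ ζ u := by
  rw [← Finset.mul_prod_erase univ (fun u => ms u ^ adds x ζ u) (mem_univ x),
      ← Finset.mul_prod_erase univ (fun u => ms u ^ ζ u) (mem_univ x)]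
  have h2 : ∀ u ∈ univ.erase x, ms u ^ adds x ζ u = ms u ^ ζ u :=
    fun u hu => by rw [adds_apply_ne ζ (Finset.ne_of_mem_erase hu)]
  rw [Finset.prod_congr rfl h2, adds_apply_same, pow_succ]
  ring

/-- remove one particle at x -/
def subs (x : S) (η : S → ℕ) : S → ℕ := Function.update η x (η x - 1)

lemma adds_subs {x : S} {η : S → ℕ} (h : η x ≠ 0) : adds x (subs x η) = η := by
  funext u
  by_cases h2 : u = x <;> simp [adds, subs, h2, Function.update_apply] <;> omega

lemma subs_adds (x : S) (ζ : S → ℕ) : subs x (adds x ζ) = ζ := by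
  funext u
  by_cases h2 : u = x <;> simp [adds, subs, h2, Function.update_apply]

lemma subs_mem_configs {N : ℕ} {η : S → ℕ} (hη : η ∈ configs S N) (hN : 1 ≤ N)
    {x : S} (hx : η x ≠ 0) : subs x η ∈ configs S (N-1) := by
  rw [mem_configs] at hη ⊢
  have : ∑ u, subs x η u + 1 = ∑ u, adds x (subs x η) u := (sum_adds x _).symm
  rw [adds_subs hx, hη] at this
  omega

/-- The master change of variables: summing a function over configurations with
one particle removed at `x`. -/
lemma sum_configs_adds {N : ℕ} (hN : 1 ≤ N) (x : S)
    (t : (S → ℕ) → ℝ) (h0 : ∀ η ∈ configs S N, η x = 0 → t η = 0) :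
    ∑ η ∈ configs S N, t η = ∑ ζ ∈ configs S (N-1), t (adds x ζ) := by
  classical
  rw [← Finset.sum_filter_of_ne (p := fun η => η x ≠ 0)
      (fun η hη ht => fun hz => ht (h0 η hη hz))]
  exact Finset.sum_nbij' (subs x) (adds x)
    (fun η hη => subs_mem_configs (mem_filter.mp hη).1 hN (mem_filter.mp hη).2)
    (fun ζ hζ => mem_filter.mpr ⟨adds_mem_configs hζ hN x, by rw [adds_apply_same]; omega⟩)
    (fun η hη => adds_subs (mem_filter.mp hη).2)
    (fun ζ hζ => subs_adds x ζ)
    (fun η hη => by rw [adds_subs (mem_filter.mp hη).2])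

lemma weight_adds {α : ℝ} (ms : S → ℝ) (K ZN : ℝ) (x : S) (ζ : S → ℕ) :
    (K * (∏ u, ms u ^ adds x ζ u) / (ZN * ∏ u, aZR α (adds x ζ u))) * gZR α (adds x ζ x)
      = K * (∏ u, ms u ^ ζ u) / (ZN * ∏ u, aZR α (ζ u)) * ms x := by
  rw [adds_apply_same, gZR_succ, prod_pow_adds]
  have key := prod_adds (aZR α) x ζ
  have hAa : (∏ u, aZR α (adds x ζ u)) = aZR α (ζ x + 1) * (∏ u, aZR α (ζ u)) / aZR α (ζ x) := by
    rw [eq_div_iff (ne_of_gt (aZR_pos α (ζ x)))]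
    linarith [key]
  rw [hAa]
  rcases eq_or_ne ZN 0 with h | h
  · simp [h]
  · have hA : (0:ℝ) < ∏ u, aZR α (ζ u) := Finset.prod_pos (fun u _ => aZR_pos α (ζ u))
    have h1 := ne_of_gt (aZR_pos α (ζ x))
    have h2 := ne_of_gt (aZR_pos α (ζ x + 1))
    field_simp

lemma masterM {α : ℝ} (ms : S → ℝ) (K ZN : ℝ) {N : ℕ} (hN : 1 ≤ N) (G : (S → ℕ) → S → ℝ) :
    ∑ η ∈ configs S N, ∑ x,
        (K * (∏ u, ms u ^ η u) / (ZN * ∏ u, aZR α (η u))) * gZR α (η x) * G η x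
      = ∑ ζ ∈ configs S (N-1), ∑ x,
          (K * (∏ u, ms u ^ ζ u) / (ZN * ∏ u, aZR α (ζ u)) * ms x) * G (adds x ζ) x := by
  classical
  rw [Finset.sum_comm, Finset.sum_comm (s := configs S (N-1))]
  refine Finset.sum_congr rfl (fun x _ => ?_)
  rw [sum_configs_adds hN x _ (fun η hη hz => by simp [hz, gZR])]
  exact Finset.sum_congr rfl (fun ζ _ => by rw [weight_adds])

lemma cs_weighted {ι : Type*} (s : Finset ι) (w f g : ι → ℝ) (hw : ∀ i ∈ s, 0 ≤ w i) :
    ∑ i ∈ s, w i * (f i * g i) ≤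
      Real.sqrt (∑ i ∈ s, w i * f i ^ 2) * Real.sqrt (∑ i ∈ s, w i * g i ^ 2) := by
  have e1 : ∀ i ∈ s, w i * (f i * g i)
      = (Real.sqrt (w i) * f i) * (Real.sqrt (w i) * g i) := by
    intro i hi
    have : Real.sqrt (w i) * Real.sqrt (w i) = w i := Real.mul_self_sqrt (hw i hi)
    linear_combination (f i * g i) * this.symm
  have e2 : ∀ i ∈ s, w i * f i ^ 2 = (Real.sqrt (w i) * f i) ^ 2 := by
    intro i hi
    rw [mul_pow, Real.sq_sqrt (hw i hi)]
  have e3 : ∀ i ∈ s, w i * g i ^ 2 = (Real.sqrt (w i) * g i) ^ 2 := by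
    intro i hi
    rw [mul_pow, Real.sq_sqrt (hw i hi)]
  rw [Finset.sum_congr rfl e1, Finset.sum_congr rfl e2, Finset.sum_congr rfl e3]
  set F := fun i => Real.sqrt (w i) * f i
  set G := fun i => Real.sqrt (w i) * g i
  have h := Finset.sum_mul_sq_le_sq_mul_sq s F G
  calc ∑ i ∈ s, F i * G i ≤ |∑ i ∈ s, F i * G i| := le_abs_self _
    _ = Real.sqrt ((∑ i ∈ s, F i * G i) ^ 2) := (Real.sqrt_sq_eq_abs _).symm
    _ ≤ Real.sqrt ((∑ i ∈ s, F i ^ 2) * ∑ i ∈ s, G i ^ 2) := Real.sqrt_le_sqrt h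
    _ = Real.sqrt (∑ i ∈ s, F i ^ 2) * Real.sqrt (∑ i ∈ s, G i ^ 2) :=
        Real.sqrt_mul (Finset.sum_nonneg fun i _ => sq_nonneg _) _

lemma path_bound (ρ : S → S → ℝ) (hρ0 : ∀ x y, 0 ≤ ρ x y) (x y : S)
    (hxy : Relation.ReflTransGen (fun a b => 0 < ρ a b) x y) :
    ∃ K : ℝ, 0 ≤ K ∧ ∀ F : S → ℝ,
      |F y - F x| ≤ K * Real.sqrt (∑ a, ∑ b, ρ a b * (F b - F a)^2) := by
  induction hxy with
  | refl => exact ⟨0, le_refl 0, fun F => by simp⟩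
  | @tail b c hab hbc ih =>
    obtain ⟨K, hK0, hK⟩ := ih
    refine ⟨K + Real.sqrt (1 / ρ b c), by positivity, fun F => ?_⟩
    set Q := ∑ a, ∑ b', ρ a b' * (F b' - F a)^2 with hQ
    have hQ0 : 0 ≤ Q := Finset.sum_nonneg fun a _ =>
      Finset.sum_nonneg fun b' _ => mul_nonneg (hρ0 _ _) (sq_nonneg _)
    have t1 : ρ b c * (F c - F b)^2 ≤ ∑ b', ρ b b' * (F b' - F b)^2 :=
      Finset.single_le_sum (f := fun b' => ρ b b' * (F b' - F b)^2)
        (fun i _ => mul_nonneg (hρ0 _ _) (sq_nonneg _)) (mem_univ c)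
    have t2 : (∑ b', ρ b b' * (F b' - F b)^2) ≤ Q :=
      Finset.single_le_sum (f := fun a => ∑ b' : S, ρ a b' * (F b' - F a)^2)
        (fun i _ => Finset.sum_nonneg fun j _ => mul_nonneg (hρ0 _ _) (sq_nonneg _))
        (mem_univ b)
    have hsq : (F c - F b)^2 ≤ (1 / ρ b c) * Q := by
      rw [div_mul_eq_mul_div, le_div_iff₀ hbc]
      nlinarith [t1, t2]
    have habs : |F c - F b| ≤ Real.sqrt (1 / ρ b c) * Real.sqrt Q := by
      rw [← Real.sqrt_mul (by positivity) Q]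
      exact Real.abs_le_sqrt hsq
    calc |F c - F x| ≤ |F c - F b| + |F b - F x| := abs_sub_le _ _ _
      _ ≤ Real.sqrt (1/ρ b c) * Real.sqrt Q + K * Real.sqrt Q := add_le_add habs (hK F)
      _ = (K + Real.sqrt (1/ρ b c)) * Real.sqrt Q := by ring

lemma sector_bound [Nonempty S] (ρ c : S → S → ℝ)
    (hρ0 : ∀ x y, 0 ≤ ρ x y)
    (hconn : ∀ x y : S, Relation.ReflTransGen (fun a b => 0 < ρ a b) x y)
    (hrow : ∀ x, ∑ y, c x y = 0) (hcol : ∀ y, ∑ x, c x y = 0) :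
    ∃ C : ℝ, 0 < C ∧ ∀ F G : S → ℝ,
      |∑ x, ∑ y, c x y * F x * G y| ≤
        C * (Real.sqrt (∑ x, ∑ y, ρ x y * (F y - F x)^2) *
          Real.sqrt (∑ x, ∑ y, ρ x y * (G y - G x)^2)) := by
  classical
  choose K hK0 hK using fun x y => path_bound ρ hρ0 x y (hconn x y)
  set x₀ := Classical.arbitrary S
  have hCnn : 0 ≤ ∑ x, ∑ y, |c x y| * K x₀ x * K x₀ y :=
    Finset.sum_nonneg fun x _ => Finset.sum_nonneg fun y _ =>
      mul_nonneg (mul_nonneg (abs_nonneg _) (hK0 _ _)) (hK0 _ _)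
  refine ⟨1 + ∑ x, ∑ y, |c x y| * K x₀ x * K x₀ y, by linarith, fun F G => ?_⟩
  set QF := ∑ x, ∑ y, ρ x y * (F y - F x)^2 with hQF
  set QG := ∑ x, ∑ y, ρ x y * (G y - G x)^2 with hQG
  have hQF0 : 0 ≤ QF := Finset.sum_nonneg fun a _ =>
    Finset.sum_nonneg fun b _ => mul_nonneg (hρ0 _ _) (sq_nonneg _)
  have hQG0 : 0 ≤ QG := Finset.sum_nonneg fun a _ =>
    Finset.sum_nonneg fun b _ => mul_nonneg (hρ0 _ _) (sq_nonneg _)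
  -- center F and G
  have shift : ∑ x, ∑ y, c x y * F x * G y
      = ∑ x, ∑ y, c x y * (F x - F x₀) * (G y - G x₀) := by
    have expand : ∀ x, ∑ y, c x y * (F x - F x₀) * (G y - G x₀)
        = (∑ y, c x y * F x * G y) - (∑ y, c x y * F x₀ * G y) := by
      intro x
      have e1 : ∀ y ∈ univ, c x y * (F x - F x₀) * (G y - G x₀)
          = (c x y * F x * G y - c x y * F x₀ * G y) - ((F x - F x₀) * G x₀) * c x y :=
        fun y _ => by ring
      rw [Finset.sum_congr rfl e1, Finset.sum_sub_distrib, ← Finset.mul_sum, hrow x,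
        Finset.sum_sub_distrib]
      ring
    rw [Finset.sum_congr rfl (fun x _ => expand x), Finset.sum_sub_distrib]
    have second : ∑ x, ∑ y, c x y * F x₀ * G y = 0 := by
      rw [Finset.sum_comm]
      refine Finset.sum_eq_zero fun y _ => ?_
      have e2 : ∀ x ∈ univ, c x y * F x₀ * G y = (F x₀ * G y) * c x y := fun x _ => by ring
      rw [Finset.sum_congr rfl e2, ← Finset.mul_sum, hcol y, mul_zero]
    rw [second, sub_zero]
  rw [shift]
  have bnd : ∀ x y : S, |c x y * (F x - F x₀) * (G y - G x₀)|
      ≤ (|c x y| * K x₀ x * K x₀ y) * (Real.sqrt QF * Real.sqrt QG) := by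
    intro x y
    rw [abs_mul, abs_mul]
    have b1 : |F x - F x₀| ≤ K x₀ x * Real.sqrt QF := hK x₀ x F
    have b2 : |G y - G x₀| ≤ K x₀ y * Real.sqrt QG := hK x₀ y G
    have := mul_le_mul b1 b2 (abs_nonneg _) (mul_nonneg (hK0 _ _) (Real.sqrt_nonneg _))
    calc |c x y| * |F x - F x₀| * |G y - G x₀|
        = |c x y| * (|F x - F x₀| * |G y - G x₀|) := by ring
      _ ≤ |c x y| * ((K x₀ x * Real.sqrt QF) * (K x₀ y * Real.sqrt QG)) :=
          mul_le_mul_of_nonneg_left this (abs_nonneg _)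
      _ = (|c x y| * K x₀ x * K x₀ y) * (Real.sqrt QF * Real.sqrt QG) := by ring
  calc |∑ x, ∑ y, c x y * (F x - F x₀) * (G y - G x₀)|
      ≤ ∑ x, |∑ y, c x y * (F x - F x₀) * (G y - G x₀)| :=
        Finset.abs_sum_le_sum_abs _ _
    _ ≤ ∑ x, ∑ y, |c x y * (F x - F x₀) * (G y - G x₀)| :=
        Finset.sum_le_sum fun x _ => Finset.abs_sum_le_sum_abs _ _
    _ ≤ ∑ x, ∑ y, (|c x y| * K x₀ x * K x₀ y) * (Real.sqrt QF * Real.sqrt QG) :=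
        Finset.sum_le_sum fun x _ => Finset.sum_le_sum fun y _ => bnd x y
    _ = (∑ x, ∑ y, |c x y| * K x₀ x * K x₀ y) * (Real.sqrt QF * Real.sqrt QG) := by
        have einner : ∀ x ∈ univ, ∑ y, (|c x y| * K x₀ x * K x₀ y) * (Real.sqrt QF * Real.sqrt QG)
            = (∑ y, |c x y| * K x₀ x * K x₀ y) * (Real.sqrt QF * Real.sqrt QG) :=
          fun x _ => (Finset.sum_mul _ _ _).symm
        rw [Finset.sum_congr rfl einner, ← Finset.sum_mul]
    _ ≤ (1 + ∑ x, ∑ y, |c x y| * K x₀ x * K x₀ y) * (Real.sqrt QF * Real.sqrt QG) := by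
        have hnn : 0 ≤ Real.sqrt QF * Real.sqrt QG := by positivity
        nlinarith [hnn, hCnn]

lemma move_self (x : S) (η : S → ℕ) : move x x η = η := by simp [move]

/-- Normalized weight. -/
def WtZR (α : ℝ) (ms : S → ℝ) (K ZN : ℝ) (ζ : S → ℕ) : ℝ :=
  K * (∏ u, ms u ^ ζ u) / (ZN * ∏ u, aZR α (ζ u))

lemma WtZR_nonneg {α : ℝ} {ms : S → ℝ} {K ZN : ℝ} (hms : ∀ u, 0 ≤ ms u)
    (hK : 0 ≤ K) (hZN : 0 ≤ ZN) (ζ : S → ℕ) : 0 ≤ WtZR α ms K ZN ζ := by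
  unfold WtZR
  have h1 : (0:ℝ) ≤ ∏ u, ms u ^ ζ u := Finset.prod_nonneg fun u _ => pow_nonneg (hms u) _
  have h2 : (0:ℝ) ≤ ∏ u, aZR α (ζ u) := Finset.prod_nonneg fun u _ => (aZR_pos α _).le
  exact div_nonneg (mul_nonneg hK h1) (mul_nonneg hZN h2)

lemma masterM3 {α : ℝ} (ms : S → ℝ) (K ZN : ℝ) {N : ℕ} (hN : 1 ≤ N)
    (r' : S → S → ℝ) (Ψ : (S → ℕ) → (S → ℕ) → ℝ) (hΨ : ∀ η, Ψ η η = 0) :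
    ∑ η ∈ configs S N, ∑ x, ∑ y,
        WtZR α ms K ZN η * gZR α (η x) * r' x y * Ψ η (move x y η)
      = ∑ ζ ∈ configs S (N-1), ∑ x, ∑ y,
        WtZR α ms K ZN ζ * ms x * r' x y * Ψ (adds x ζ) (adds y ζ) := by
  classical
  calc ∑ η ∈ configs S N, ∑ x, ∑ y,
        WtZR α ms K ZN η * gZR α (η x) * r' x y * Ψ η (move x y η)
      = ∑ η ∈ configs S N, ∑ x, WtZR α ms K ZN η * gZR α (η x) *
          (∑ y, r' x y * Ψ η (move x y η)) := by
        refine Finset.sum_congr rfl fun η _ => Finset.sum_congr rfl fun x _ => ?_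
        rw [Finset.mul_sum]
        exact Finset.sum_congr rfl fun y _ => by ring
    _ = ∑ ζ ∈ configs S (N-1), ∑ x, (WtZR α ms K ZN ζ * ms x) *
          (∑ y, r' x y * Ψ (adds x ζ) (move x y (adds x ζ))) := by
        simpa [WtZR] using masterM (α := α) ms K ZN hN
          (fun η x => ∑ y, r' x y * Ψ η (move x y η))
    _ = ∑ ζ ∈ configs S (N-1), ∑ x, ∑ y,
          WtZR α ms K ZN ζ * ms x * r' x y * Ψ (adds x ζ) (adds y ζ) := by
        refine Finset.sum_congr rfl fun ζ _ => Finset.sum_congr rfl fun x _ => ?_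
        rw [Finset.mul_sum]
        refine Finset.sum_congr rfl fun y _ => ?_
        by_cases hxy : x = y
        · subst hxy
          rw [move_self, hΨ]
          ring
        · rw [move_adds hxy]
          ring

lemma mulL {α : ℝ} (μw u f : (S → ℕ) → ℝ) (r' : S → S → ℝ) (η : S → ℕ) :
    μw η * u η * LgenR α r' f η
      = ∑ x, ∑ y, μw η * gZR α (η x) * r' x y * (u η * (f (move x y η) - f η)) := by
  unfold LgenR
  rw [Finset.mul_sum]
  refine Finset.sum_congr rfl fun x _ => ?_
  rw [Finset.mul_sum]
  exact Finset.sum_congr rfl fun y _ => by ring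

lemma sum3_congr {ι : Type*} (T : Finset ι) (e1 e2 : ι → S → S → ℝ)
    (h : ∀ ζ x y, e1 ζ x y = e2 ζ x y) :
    ∑ ζ ∈ T, ∑ x, ∑ y, e1 ζ x y = ∑ ζ ∈ T, ∑ x, ∑ y, e2 ζ x y :=
  Finset.sum_congr rfl fun ζ _ => Finset.sum_congr rfl fun x _ =>
    Finset.sum_congr rfl fun y _ => h ζ x y

lemma sum3_swap {ι : Type*} (T : Finset ι) (e : ι → S → S → ℝ) :
    ∑ ζ ∈ T, ∑ x, ∑ y, e ζ x y = ∑ ζ ∈ T, ∑ x, ∑ y, e ζ y x :=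
  Finset.sum_congr rfl fun ζ _ => Finset.sum_comm

lemma sum3_add {ι : Type*} (T : Finset ι) (e1 e2 : ι → S → S → ℝ) :
    ∑ ζ ∈ T, ∑ x, ∑ y, (e1 ζ x y + e2 ζ x y)
      = (∑ ζ ∈ T, ∑ x, ∑ y, e1 ζ x y) + ∑ ζ ∈ T, ∑ x, ∑ y, e2 ζ x y := by
  simp [Finset.sum_add_distrib]

lemma sum3_sub {ι : Type*} (T : Finset ι) (e1 e2 : ι → S → S → ℝ) :
    ∑ ζ ∈ T, ∑ x, ∑ y, (e1 ζ x y - e2 ζ x y)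
      = (∑ ζ ∈ T, ∑ x, ∑ y, e1 ζ x y) - ∑ ζ ∈ T, ∑ x, ∑ y, e2 ζ x y := by
  simp [Finset.sum_sub_distrib]

lemma sum3_nonneg {ι : Type*} (T : Finset ι) (e : ι → S → S → ℝ)
    (h : ∀ ζ x y, 0 ≤ e ζ x y) : 0 ≤ ∑ ζ ∈ T, ∑ x, ∑ y, e ζ x y :=
  Finset.sum_nonneg fun ζ _ => Finset.sum_nonneg fun x _ =>
    Finset.sum_nonneg fun y _ => h ζ x y

lemma flat3 {ι : Type*} (T : Finset ι) (e : ι → S → S → ℝ) :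
    ∑ ζ ∈ T, ∑ x, ∑ y, e ζ x y
      = ∑ p ∈ T ×ˢ ((univ : Finset S) ×ˢ (univ : Finset S)), e p.1 p.2.1 p.2.2 := by
  rw [Finset.sum_product]
  exact Finset.sum_congr rfl fun ζ _ =>
    (Finset.sum_product (s := univ) (t := univ) (f := fun q => e ζ q.1 q.2)).symm

/-- Weighted Cauchy-Schwarz for triple sums. -/
lemma cs3 {ι : Type*} (T : Finset ι) (w f g : ι → S → S → ℝ)
    (hw : ∀ ζ x y, 0 ≤ w ζ x y) :
    ∑ ζ ∈ T, ∑ x, ∑ y, w ζ x y * (f ζ x y * g ζ x y)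
      ≤ Real.sqrt (∑ ζ ∈ T, ∑ x, ∑ y, w ζ x y * f ζ x y ^ 2) *
        Real.sqrt (∑ ζ ∈ T, ∑ x, ∑ y, w ζ x y * g ζ x y ^ 2) := by
  rw [flat3, flat3 T (fun ζ x y => w ζ x y * f ζ x y ^ 2),
    flat3 T (fun ζ x y => w ζ x y * g ζ x y ^ 2)]
  exact cs_weighted _ (fun p : ι × S × S => w p.1 p.2.1 p.2.2)
    (fun p : ι × S × S => f p.1 p.2.1 p.2.2)
    (fun p : ι × S × S => g p.1 p.2.1 p.2.2) (fun p _ => hw _ _ _)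

lemma Ladd {α : ℝ} (r1 r2 r3 : S → S → ℝ) (hr : ∀ x y, r1 x y + r2 x y = 2 * r3 x y)
    (f : (S → ℕ) → ℝ) (η : S → ℕ) :
    LgenR α r1 f η + LgenR α r2 f η = 2 * LgenR α r3 f η := by
  unfold LgenR
  rw [← Finset.sum_add_distrib, Finset.mul_sum]
  refine Finset.sum_congr rfl fun x _ => ?_
  rw [← Finset.sum_add_distrib, Finset.mul_sum]
  refine Finset.sum_congr rfl fun y _ => ?_
  have := hr x y
  linear_combination (gZR α (η x) * (f (move x y η) - f η)) * this

lemma sum3_smul {ι : Type*} (T : Finset ι) (a : ℝ) (e : ι → S → S → ℝ) :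
    ∑ ζ ∈ T, ∑ x, ∑ y, a * e ζ x y = a * ∑ ζ ∈ T, ∑ x, ∑ y, e ζ x y := by
  simp [Finset.mul_sum]

lemma sum3_neg {ι : Type*} (T : Finset ι) (e : ι → S → S → ℝ) :
    ∑ ζ ∈ T, ∑ x, ∑ y, (-(e ζ x y)) = -∑ ζ ∈ T, ∑ x, ∑ y, e ζ x y := by
  simp

end ZRAux

end

set_option maxHeartbeats 4000000 in
theorem stmt_3 {S : Type*} [Fintype S] (α : ℝ) (hα : 2 < α)
    (r : S → S → ℝ) (hr0 : ∀ x y, 0 ≤ r x y) (hrdiag : ∀ x, r x x = 0)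
    (hirr : ∀ x y : S, Relation.ReflTransGen (fun a b => 0 < r a b) x y)
    (m : S → ℝ) (hm : ∀ x, 0 < m x)
    (hinv : ∀ x, ∑ y, m x * r x y = ∑ y, m y * r y x)
    (Mstar : ℝ) (hMstar : IsGreatest (Set.range m) Mstar)
    (Sstar : Finset S) (hSstar : Sstar = Finset.univ.filter fun x => m x = Mstar)
    (hκ : 2 ≤ Sstar.card)
    (mstar : S → ℝ) (hmstar : ∀ x, mstar x = m x / Mstar)
    (Z : ℕ → ℝ)
    (hZ : ∀ N, Z N = (N : ℝ) ^ α *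
      ∑ η ∈ configs S N, (∏ x, mstar x ^ η x) / ∏ x, aZR α (η x))
    (μ : ℕ → (S → ℕ) → ℝ)
    (hμ : ∀ N η, μ N η =
      (N : ℝ) ^ α * (∏ x, mstar x ^ η x) / (Z N * ∏ x, aZR α (η x)))
    (rstar : S → S → ℝ) (hrstar : ∀ x y, rstar x y = r y x * m y / m x)
    (rsym : S → S → ℝ) (hrsym : ∀ x y, rsym x y = (r x y + rstar x y) / 2) :
    ∃ C : ℝ, 0 < C ∧ ∀ N : ℕ, 1 ≤ N → ∀ A B : Finset (S → ℕ),
      A ⊆ configs S N → B ⊆ configs S N → Disjoint A B →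
      A.Nonempty → B.Nonempty →
      ∀ h hs : (S → ℕ) → ℝ,
        (∀ η ∈ A, h η = 1) → (∀ η ∈ B, h η = 0) →
        (∀ η ∈ configs S N, η ∉ A → η ∉ B → LgenR α r h η = 0) →
        (∀ η ∈ A, hs η = 1) → (∀ η ∈ B, hs η = 0) →
        (∀ η ∈ configs S N, η ∉ A → η ∉ B → LgenR α rsym hs η = 0) →
        DirN α r (μ N) N hs ≤ DirN α r (μ N) N h ∧
          DirN α r (μ N) N h ≤ C * DirN α r (μ N) N hs := by
  
  classical
  -- ambient positivity facts
  have hSne : Nonempty S := by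
    have hpos : 0 < Sstar.card := by omega
    obtain ⟨x, hx⟩ := Finset.card_pos.mp hpos
    exact ⟨x⟩
  obtain ⟨x₀m, hx₀m⟩ := hMstar.1
  have hMpos : 0 < Mstar := hx₀m ▸ hm x₀m
  have hmspos : ∀ x, 0 < mstar x := fun x => by
    rw [hmstar]; exact div_pos (hm x) hMpos
  -- rates in ζ-coordinates
  set ρ : S → S → ℝ := fun x y => mstar x * r x y with hρdef
  set c : S → S → ℝ := fun x y => ρ x y - ρ y x with hcdef
  have hρ0 : ∀ x y, 0 ≤ ρ x y := fun x y => mul_nonneg (hmspos x).le (hr0 x y)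
  have hconn : ∀ x y : S, Relation.ReflTransGen (fun a b => 0 < ρ a b) x y :=
    fun x y => Relation.ReflTransGen.mono (fun a b hab => mul_pos (hmspos a) hab) x y (hirr x y)
  have hρm : ∀ x y, ρ x y = m x * r x y / Mstar := fun x y => by
    simp only [hρdef]; rw [hmstar]; ring
  have hbal : ∀ x, ∑ y, ρ x y = ∑ y, ρ y x := by
    intro x
    have l1 : ∑ y, ρ x y = (∑ y, m x * r x y) / Mstar := by
      rw [Finset.sum_div]; exact Finset.sum_congr rfl fun y _ => hρm x y
    have l2 : ∑ y, ρ y x = (∑ y, m y * r y x) / Mstar := by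
      rw [Finset.sum_div]; exact Finset.sum_congr rfl fun y _ => hρm y x
    rw [l1, l2, hinv x]
  have hrow : ∀ x, ∑ y, c x y = 0 := by
    intro x
    simp only [hcdef]
    rw [Finset.sum_sub_distrib, hbal x, sub_self]
  have hcol : ∀ y, ∑ x, c x y = 0 := by
    intro y
    simp only [hcdef]
    rw [Finset.sum_sub_distrib, hbal y, sub_self]
  have hmsrst : ∀ x y, mstar x * rstar x y = ρ y x := by
    intro x y
    simp only [hρdef]
    rw [hrstar, hmstar, hmstar]
    have h1 : m x ≠ 0 := ne_of_gt (hm x)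
    have h2 : Mstar ≠ 0 := ne_of_gt hMpos
    field_simp
  obtain ⟨Csec, hCpos, hsec⟩ := sector_bound ρ c hρ0 hconn hrow hcol
  refine ⟨(1 + Csec)^2, by positivity, ?_⟩
  intro N hN A B hA hB hAB hAne hBne h hs hA1 hB0 hharm hsA1 hsB0 hsharm
  -- the weight in ζ-coordinates
  set V : (S → ℕ) → ℝ := WtZR α mstar ((N:ℝ)^α) (Z N) with hVdef
  have hμV : μ N = V := by
    funext η
    rw [hμ N η, hVdef]
    rfl
  have hZ0 : 0 ≤ Z N := by
    rw [hZ]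
    refine mul_nonneg (Real.rpow_nonneg (Nat.cast_nonneg N) α)
      (Finset.sum_nonneg fun η _ => ?_)
    exact div_nonneg (Finset.prod_nonneg fun u _ => pow_nonneg (hmspos u).le _)
      (Finset.prod_nonneg fun u _ => (aZR_pos α _).le)
  have hV0 : ∀ ζ, 0 ≤ V ζ := by
    rw [hVdef]
    exact fun ζ => WtZR_nonneg (fun u => (hmspos u).le)
      (Real.rpow_nonneg (Nat.cast_nonneg N) α) hZ0 ζ
  rw [hμV]
  -- Dirichlet form in ζ-coordinates
  have hdir : ∀ f : (S → ℕ) → ℝ, DirN α r V N f = (1/2) *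
      ∑ ζ ∈ configs S (N-1), ∑ x, ∑ y,
        V ζ * ρ x y * (f (adds y ζ) - f (adds x ζ))^2 := by
    intro f
    unfold DirN
    congr 1
    have hM3 := masterM3 (α := α) mstar ((N:ℝ)^α) (Z N) hN r
      (fun η ξ => (f ξ - f η)^2) (fun η => by ring)
    rw [← hVdef] at hM3
    refine hM3.trans (sum3_congr _ _ _ (fun ζ x y => ?_))
    simp only [hρdef]
    ring
  -- scalar products with the generators, in ζ-coordinates
  have hL : ∀ (r' : S → S → ℝ) (u f : (S → ℕ) → ℝ),
      ∑ η ∈ configs S N, V η * u η * LgenR α r' f η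
        = ∑ ζ ∈ configs S (N-1), ∑ x, ∑ y,
            V ζ * mstar x * r' x y * (u (adds x ζ) * (f (adds y ζ) - f (adds x ζ))) := by
    intro r' u f
    have step1 : ∑ η ∈ configs S N, V η * u η * LgenR α r' f η
        = ∑ η ∈ configs S N, ∑ x, ∑ y,
            V η * gZR α (η x) * r' x y * (u η * (f (move x y η) - f η)) :=
      Finset.sum_congr rfl fun η _ => mulL (α := α) V u f r' η
    have hM3 := masterM3 (α := α) mstar ((N:ℝ)^α) (Z N) hN r'
      (fun η ξ => u η * (f ξ - f η)) (fun η => by ring)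
    rw [← hVdef] at hM3
    exact step1.trans hM3
  have hLr : ∀ u f : (S → ℕ) → ℝ,
      ∑ η ∈ configs S N, V η * u η * LgenR α r f η
        = ∑ ζ ∈ configs S (N-1), ∑ x, ∑ y,
            V ζ * ρ x y * (u (adds x ζ) * (f (adds y ζ) - f (adds x ζ))) :=
    fun u f => (hL r u f).trans (sum3_congr _ _ _ (fun ζ x y => by
      simp only [hρdef]; ring))
  have hLrst : ∀ u f : (S → ℕ) → ℝ,
      ∑ η ∈ configs S N, V η * u η * LgenR α rstar f η
        = ∑ ζ ∈ configs S (N-1), ∑ x, ∑ y,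
            V ζ * ρ y x * (u (adds x ζ) * (f (adds y ζ) - f (adds x ζ))) :=
    fun u f => (hL rstar u f).trans (sum3_congr _ _ _ (fun ζ x y => by
      rw [mul_assoc (V ζ), hmsrst x y]))
  -- sum of generator and adjoint pairing equals minus the bilinear Dirichlet form
  have hplus : ∀ u f : (S → ℕ) → ℝ,
      (∑ η ∈ configs S N, V η * u η * LgenR α r f η)
        + (∑ η ∈ configs S N, V η * u η * LgenR α rstar f η)
      = -∑ ζ ∈ configs S (N-1), ∑ x, ∑ y, V ζ * ρ x y *
          ((u (adds y ζ) - u (adds x ζ)) * (f (adds y ζ) - f (adds x ζ))) := by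
    intro u f
    rw [hLr u f, hLrst u f,
      sum3_swap (configs S (N-1)) (fun ζ x y =>
        V ζ * ρ y x * (u (adds x ζ) * (f (adds y ζ) - f (adds x ζ)))),
      ← sum3_add]
    rw [sum3_congr (configs S (N-1)) _
      (fun ζ x y => -(V ζ * ρ x y *
        ((u (adds y ζ) - u (adds x ζ)) * (f (adds y ζ) - f (adds x ζ)))))
      (fun ζ x y => by ring)]
    exact sum3_neg _ _
  have hminus : ∀ u f : (S → ℕ) → ℝ,
      (∑ η ∈ configs S N, V η * u η * LgenR α r f η)
        - (∑ η ∈ configs S N, V η * u η * LgenR α rstar f η)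
      = ∑ ζ ∈ configs S (N-1), ∑ x, ∑ y, V ζ *
          (c x y * (u (adds x ζ) * (f (adds y ζ) - f (adds x ζ)))) := by
    intro u f
    rw [hLr u f, hLrst u f, ← sum3_sub]
    exact sum3_congr _ _ _ (fun ζ x y => by simp only [hcdef]; ring)
  -- discrete divergence theorem: weighted sums of gradients vanish
  have hzero3 : ∀ φ : (S → ℕ) → ℝ,
      ∑ ζ ∈ configs S (N-1), ∑ x, ∑ y,
        V ζ * ρ x y * (φ (adds y ζ) - φ (adds x ζ)) = 0 := by
    intro φ
    calc ∑ ζ ∈ configs S (N-1), ∑ x, ∑ y,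
          V ζ * ρ x y * (φ (adds y ζ) - φ (adds x ζ))
        = ∑ ζ ∈ configs S (N-1), ∑ x, ∑ y,
            (V ζ * ρ x y * φ (adds y ζ) - V ζ * ρ x y * φ (adds x ζ)) :=
          sum3_congr _ _ _ (fun ζ x y => by ring)
      _ = (∑ ζ ∈ configs S (N-1), ∑ x, ∑ y, V ζ * ρ x y * φ (adds y ζ))
            - ∑ ζ ∈ configs S (N-1), ∑ x, ∑ y, V ζ * ρ x y * φ (adds x ζ) :=
          sum3_sub _ _ _
      _ = (∑ ζ ∈ configs S (N-1), ∑ x, ∑ y, V ζ * ρ y x * φ (adds x ζ))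
            - ∑ ζ ∈ configs S (N-1), ∑ x, ∑ y, V ζ * ρ x y * φ (adds x ζ) := by
          rw [sum3_swap (configs S (N-1))
            (fun ζ x y => V ζ * ρ x y * φ (adds y ζ))]
      _ = 0 := by
          rw [← sum3_sub]
          refine Finset.sum_eq_zero fun ζ _ => Finset.sum_eq_zero fun x _ => ?_
          have e : ∀ y ∈ univ, V ζ * ρ y x * φ (adds x ζ) - V ζ * ρ x y * φ (adds x ζ)
              = (V ζ * φ (adds x ζ)) * ρ y x - (V ζ * φ (adds x ζ)) * ρ x y :=
            fun y _ => by ring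
          rw [Finset.sum_congr rfl e, Finset.sum_sub_distrib, ← Finset.mul_sum,
            ← Finset.mul_sum, hbal x, sub_self]
  -- vanishing pairings from harmonicity
  set uu : (S → ℕ) → ℝ := fun η => h η - hs η with huu
  have fact1 : ∑ η ∈ configs S N, V η * uu η * LgenR α rsym hs η = 0 := by
    refine Finset.sum_eq_zero fun η hη => ?_
    simp only [huu]
    by_cases hA' : η ∈ A
    · rw [hA1 η hA', hsA1 η hA', sub_self, mul_zero, zero_mul]
    by_cases hB' : η ∈ B
    · rw [hB0 η hB', hsB0 η hB', sub_self, mul_zero, zero_mul]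
    · rw [hsharm η hη hA' hB', mul_zero]
  have fact2 : ∑ η ∈ configs S N, V η * uu η * LgenR α r h η = 0 := by
    refine Finset.sum_eq_zero fun η hη => ?_
    simp only [huu]
    by_cases hA' : η ∈ A
    · rw [hA1 η hA', hsA1 η hA', sub_self, mul_zero, zero_mul]
    by_cases hB' : η ∈ B
    · rw [hB0 η hB', hsB0 η hB', sub_self, mul_zero, zero_mul]
    · rw [hharm η hη hA' hB', mul_zero]
  have hLsum : (∑ η ∈ configs S N, V η * uu η * LgenR α r hs η)
      + (∑ η ∈ configs S N, V η * uu η * LgenR α rstar hs η)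
      = 2 * ∑ η ∈ configs S N, V η * uu η * LgenR α rsym hs η := by
    rw [← Finset.sum_add_distrib, Finset.mul_sum]
    refine Finset.sum_congr rfl fun η _ => ?_
    have hadd := Ladd (α := α) r rstar rsym (fun x y => by rw [hrsym]; ring) hs η
    linear_combination (V η * uu η) * hadd
  -- Part 1 : cross term vanishes
  have hcross0 : ∑ ζ ∈ configs S (N-1), ∑ x, ∑ y, V ζ * ρ x y *
      ((uu (adds y ζ) - uu (adds x ζ)) * (hs (adds y ζ) - hs (adds x ζ))) = 0 := by
    have := hplus uu hs
    rw [hLsum, fact1, mul_zero] at this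
    linarith [this]
  -- expansion of SQh
  have hDexp : ∑ ζ ∈ configs S (N-1), ∑ x, ∑ y,
      V ζ * ρ x y * (h (adds y ζ) - h (adds x ζ))^2
    = (∑ ζ ∈ configs S (N-1), ∑ x, ∑ y,
        V ζ * ρ x y * (hs (adds y ζ) - hs (adds x ζ))^2)
      + (2 * ∑ ζ ∈ configs S (N-1), ∑ x, ∑ y, V ζ * ρ x y *
          ((uu (adds y ζ) - uu (adds x ζ)) * (hs (adds y ζ) - hs (adds x ζ)))
        + ∑ ζ ∈ configs S (N-1), ∑ x, ∑ y,
            V ζ * ρ x y * (uu (adds y ζ) - uu (adds x ζ))^2) := by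
    rw [← sum3_smul, ← sum3_add, ← sum3_add]
    refine sum3_congr _ _ _ (fun ζ x y => ?_)
    simp only [huu]
    ring
  have hSQu0 : 0 ≤ ∑ ζ ∈ configs S (N-1), ∑ x, ∑ y,
      V ζ * ρ x y * (uu (adds y ζ) - uu (adds x ζ))^2 :=
    sum3_nonneg _ _ (fun ζ x y => mul_nonneg (mul_nonneg (hV0 ζ) (hρ0 x y)) (sq_nonneg _))
  have part1 : DirN α r V N hs ≤ DirN α r V N h := by
    rw [hdir hs, hdir h, hDexp, hcross0]
    linarith [hSQu0]
  refine ⟨part1, ?_⟩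
  -- Part 2
  have hSQs0 : 0 ≤ ∑ ζ ∈ configs S (N-1), ∑ x, ∑ y,
      V ζ * ρ x y * (hs (adds y ζ) - hs (adds x ζ))^2 :=
    sum3_nonneg _ _ (fun ζ x y => mul_nonneg (mul_nonneg (hV0 ζ) (hρ0 x y)) (sq_nonneg _))
  have hSQh0 : 0 ≤ ∑ ζ ∈ configs S (N-1), ∑ x, ∑ y,
      V ζ * ρ x y * (h (adds y ζ) - h (adds x ζ))^2 :=
    sum3_nonneg _ _ (fun ζ x y => mul_nonneg (mul_nonneg (hV0 ζ) (hρ0 x y)) (sq_nonneg _))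
  -- representation of Dir h via the pairing with h
  have hhh_plus := hplus h h
  have hhh_minus : (∑ η ∈ configs S N, V η * h η * LgenR α r h η)
      - (∑ η ∈ configs S N, V η * h η * LgenR α rstar h η) = 0 := by
    rw [hLr h h, hLrst h h,
      sum3_swap (configs S (N-1)) (fun ζ x y =>
        V ζ * ρ y x * (h (adds x ζ) * (h (adds y ζ) - h (adds x ζ)))), ← sum3_sub]
    have := hzero3 (fun η => h η * h η)
    rw [← this]
    exact sum3_congr _ _ _ (fun ζ x y => by ring)
  have hDhform : ∑ η ∈ configs S N, V η * h η * LgenR α r h η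
      = -(1/2) * ∑ ζ ∈ configs S (N-1), ∑ x, ∑ y,
          V ζ * ρ x y * (h (adds y ζ) - h (adds x ζ))^2 := by
    have e1 : -∑ ζ ∈ configs S (N-1), ∑ x, ∑ y, V ζ * ρ x y *
        ((h (adds y ζ) - h (adds x ζ)) * (h (adds y ζ) - h (adds x ζ)))
        = -∑ ζ ∈ configs S (N-1), ∑ x, ∑ y,
            V ζ * ρ x y * (h (adds y ζ) - h (adds x ζ))^2 := by
      rw [sum3_congr (configs S (N-1)) _
        (fun ζ x y => V ζ * ρ x y * (h (adds y ζ) - h (adds x ζ))^2)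
        (fun ζ x y => by ring)]
    rw [e1] at hhh_plus
    linarith [hhh_plus, hhh_minus]
  -- replace h by hs in the pairing
  have hsplit_pair : ∑ η ∈ configs S N, V η * h η * LgenR α r h η
      = (∑ η ∈ configs S N, V η * hs η * LgenR α r h η)
        + ∑ η ∈ configs S N, V η * uu η * LgenR α r h η := by
    rw [← Finset.sum_add_distrib]
    refine Finset.sum_congr rfl fun η _ => ?_
    simp only [huu]
    ring
  have hpair_hs : ∑ η ∈ configs S N, V η * hs η * LgenR α r h η
      = -(1/2) * ∑ ζ ∈ configs S (N-1), ∑ x, ∑ y,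
          V ζ * ρ x y * (h (adds y ζ) - h (adds x ζ))^2 := by
    rw [← hDhform, hsplit_pair, fact2, add_zero]
  -- decomposition into symmetric and antisymmetric parts
  have hsh_plus := hplus hs h
  have hsh_minus := hminus hs h
  -- CR bound (Cauchy-Schwarz)
  have hCR : ∑ ζ ∈ configs S (N-1), ∑ x, ∑ y, V ζ * ρ x y *
      ((hs (adds y ζ) - hs (adds x ζ)) * (h (adds y ζ) - h (adds x ζ)))
      ≤ Real.sqrt (∑ ζ ∈ configs S (N-1), ∑ x, ∑ y,
          V ζ * ρ x y * (hs (adds y ζ) - hs (adds x ζ))^2) *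
        Real.sqrt (∑ ζ ∈ configs S (N-1), ∑ x, ∑ y,
          V ζ * ρ x y * (h (adds y ζ) - h (adds x ζ))^2) := by
    have := cs3 (configs S (N-1)) (fun ζ x y => V ζ * ρ x y)
      (fun ζ x y => hs (adds y ζ) - hs (adds x ζ))
      (fun ζ x y => h (adds y ζ) - h (adds x ζ))
      (fun ζ x y => mul_nonneg (hV0 ζ) (hρ0 x y))
    exact this
  -- CT bound (sector condition)
  have hQF0 : ∀ ζ, 0 ≤ ∑ x, ∑ y, ρ x y * (hs (adds y ζ) - hs (adds x ζ))^2 :=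
    fun ζ => Finset.sum_nonneg fun x _ => Finset.sum_nonneg fun y _ =>
      mul_nonneg (hρ0 x y) (sq_nonneg _)
  have hQG0 : ∀ ζ, 0 ≤ ∑ x, ∑ y, ρ x y * (h (adds y ζ) - h (adds x ζ))^2 :=
    fun ζ => Finset.sum_nonneg fun x _ => Finset.sum_nonneg fun y _ =>
      mul_nonneg (hρ0 x y) (sq_nonneg _)
  have hCT : |∑ ζ ∈ configs S (N-1), ∑ x, ∑ y, V ζ *
      (c x y * (hs (adds x ζ) * (h (adds y ζ) - h (adds x ζ))))|
      ≤ Csec * (Real.sqrt (∑ ζ ∈ configs S (N-1), ∑ x, ∑ y,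
          V ζ * ρ x y * (hs (adds y ζ) - hs (adds x ζ))^2) *
        Real.sqrt (∑ ζ ∈ configs S (N-1), ∑ x, ∑ y,
          V ζ * ρ x y * (h (adds y ζ) - h (adds x ζ))^2)) := by
    -- pull the weight out of the inner double sum
    have hpull : ∑ ζ ∈ configs S (N-1), ∑ x, ∑ y, V ζ *
        (c x y * (hs (adds x ζ) * (h (adds y ζ) - h (adds x ζ))))
        = ∑ ζ ∈ configs S (N-1), V ζ *
            ∑ x, ∑ y, c x y * (hs (adds x ζ) * (h (adds y ζ) - h (adds x ζ))) := by
      refine Finset.sum_congr rfl fun ζ _ => ?_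
      rw [Finset.mul_sum]
      exact Finset.sum_congr rfl fun x _ => (Finset.mul_sum _ _ _).symm
    -- per-ζ bound via the sector lemma
    have hBB : ∀ ζ, |∑ x, ∑ y, c x y * (hs (adds x ζ) * (h (adds y ζ) - h (adds x ζ)))|
        ≤ Csec * (Real.sqrt (∑ x, ∑ y, ρ x y * (hs (adds y ζ) - hs (adds x ζ))^2) *
            Real.sqrt (∑ x, ∑ y, ρ x y * (h (adds y ζ) - h (adds x ζ))^2)) := by
      intro ζ
      have hBrw : ∑ x, ∑ y, c x y * (hs (adds x ζ) * (h (adds y ζ) - h (adds x ζ)))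
          = ∑ x, ∑ y, c x y * hs (adds x ζ) * h (adds y ζ) := by
        refine Finset.sum_congr rfl fun x _ => ?_
        have e : ∀ y ∈ univ, c x y * (hs (adds x ζ) * (h (adds y ζ) - h (adds x ζ)))
            = c x y * hs (adds x ζ) * h (adds y ζ)
              - (hs (adds x ζ) * h (adds x ζ)) * c x y := fun y _ => by ring
        rw [Finset.sum_congr rfl e, Finset.sum_sub_distrib, ← Finset.mul_sum,
          hrow x, mul_zero, sub_zero]
      rw [hBrw]
      have := hsec (fun x => hs (adds x ζ)) (fun x => h (adds x ζ))
      simpa using this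
    have habs : |∑ ζ ∈ configs S (N-1), V ζ *
        ∑ x, ∑ y, c x y * (hs (adds x ζ) * (h (adds y ζ) - h (adds x ζ)))|
        ≤ ∑ ζ ∈ configs S (N-1), V ζ *
            (Csec * (Real.sqrt (∑ x, ∑ y, ρ x y * (hs (adds y ζ) - hs (adds x ζ))^2) *
              Real.sqrt (∑ x, ∑ y, ρ x y * (h (adds y ζ) - h (adds x ζ))^2))) := by
      refine (Finset.abs_sum_le_sum_abs _ _).trans (Finset.sum_le_sum fun ζ _ => ?_)
      rw [abs_mul, abs_of_nonneg (hV0 ζ)]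
      exact mul_le_mul_of_nonneg_left (hBB ζ) (hV0 ζ)
    -- weighted Cauchy-Schwarz over ζ
    have hcs2 : ∑ ζ ∈ configs S (N-1), V ζ *
        (Real.sqrt (∑ x, ∑ y, ρ x y * (hs (adds y ζ) - hs (adds x ζ))^2) *
          Real.sqrt (∑ x, ∑ y, ρ x y * (h (adds y ζ) - h (adds x ζ))^2))
        ≤ Real.sqrt (∑ ζ ∈ configs S (N-1), V ζ *
            (∑ x, ∑ y, ρ x y * (hs (adds y ζ) - hs (adds x ζ))^2)) *
          Real.sqrt (∑ ζ ∈ configs S (N-1), V ζ *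
            (∑ x, ∑ y, ρ x y * (h (adds y ζ) - h (adds x ζ))^2)) := by
      have := cs_weighted (configs S (N-1)) V
        (fun ζ => Real.sqrt (∑ x, ∑ y, ρ x y * (hs (adds y ζ) - hs (adds x ζ))^2))
        (fun ζ => Real.sqrt (∑ x, ∑ y, ρ x y * (h (adds y ζ) - h (adds x ζ))^2))
        (fun ζ _ => hV0 ζ)
      have e1 : ∑ ζ ∈ configs S (N-1), V ζ *
          (Real.sqrt (∑ x, ∑ y, ρ x y * (hs (adds y ζ) - hs (adds x ζ))^2))^2
          = ∑ ζ ∈ configs S (N-1), V ζ *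
              (∑ x, ∑ y, ρ x y * (hs (adds y ζ) - hs (adds x ζ))^2) :=
        Finset.sum_congr rfl fun ζ _ => by rw [Real.sq_sqrt (hQF0 ζ)]
      have e2 : ∑ ζ ∈ configs S (N-1), V ζ *
          (Real.sqrt (∑ x, ∑ y, ρ x y * (h (adds y ζ) - h (adds x ζ))^2))^2
          = ∑ ζ ∈ configs S (N-1), V ζ *
              (∑ x, ∑ y, ρ x y * (h (adds y ζ) - h (adds x ζ))^2) :=
        Finset.sum_congr rfl fun ζ _ => by rw [Real.sq_sqrt (hQG0 ζ)]
      rw [e1, e2] at this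
      exact this
    -- unfold inner sums back to triple form
    have eflat1 : ∑ ζ ∈ configs S (N-1), V ζ *
        (∑ x, ∑ y, ρ x y * (hs (adds y ζ) - hs (adds x ζ))^2)
        = ∑ ζ ∈ configs S (N-1), ∑ x, ∑ y,
            V ζ * ρ x y * (hs (adds y ζ) - hs (adds x ζ))^2 := by
      refine Finset.sum_congr rfl fun ζ _ => ?_
      rw [Finset.mul_sum]
      refine Finset.sum_congr rfl fun x _ => ?_
      rw [Finset.mul_sum]
      exact Finset.sum_congr rfl fun y _ => by ring
    have eflat2 : ∑ ζ ∈ configs S (N-1), V ζ *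
        (∑ x, ∑ y, ρ x y * (h (adds y ζ) - h (adds x ζ))^2)
        = ∑ ζ ∈ configs S (N-1), ∑ x, ∑ y,
            V ζ * ρ x y * (h (adds y ζ) - h (adds x ζ))^2 := by
      refine Finset.sum_congr rfl fun ζ _ => ?_
      rw [Finset.mul_sum]
      refine Finset.sum_congr rfl fun x _ => ?_
      rw [Finset.mul_sum]
      exact Finset.sum_congr rfl fun y _ => by ring
    rw [hpull]
    calc |∑ ζ ∈ configs S (N-1), V ζ *
        ∑ x, ∑ y, c x y * (hs (adds x ζ) * (h (adds y ζ) - h (adds x ζ)))|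
        ≤ ∑ ζ ∈ configs S (N-1), V ζ *
            (Csec * (Real.sqrt (∑ x, ∑ y, ρ x y * (hs (adds y ζ) - hs (adds x ζ))^2) *
              Real.sqrt (∑ x, ∑ y, ρ x y * (h (adds y ζ) - h (adds x ζ))^2))) := habs
      _ = Csec * ∑ ζ ∈ configs S (N-1), V ζ *
            (Real.sqrt (∑ x, ∑ y, ρ x y * (hs (adds y ζ) - hs (adds x ζ))^2) *
              Real.sqrt (∑ x, ∑ y, ρ x y * (h (adds y ζ) - h (adds x ζ))^2)) := by
          rw [Finset.mul_sum]
          exact Finset.sum_congr rfl fun ζ _ => by ring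
      _ ≤ Csec * (Real.sqrt (∑ ζ ∈ configs S (N-1), V ζ *
            (∑ x, ∑ y, ρ x y * (hs (adds y ζ) - hs (adds x ζ))^2)) *
          Real.sqrt (∑ ζ ∈ configs S (N-1), V ζ *
            (∑ x, ∑ y, ρ x y * (h (adds y ζ) - h (adds x ζ))^2))) :=
          mul_le_mul_of_nonneg_left hcs2 hCpos.le
      _ = Csec * (Real.sqrt (∑ ζ ∈ configs S (N-1), ∑ x, ∑ y,
            V ζ * ρ x y * (hs (adds y ζ) - hs (adds x ζ))^2) *
          Real.sqrt (∑ ζ ∈ configs S (N-1), ∑ x, ∑ y,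
            V ζ * ρ x y * (h (adds y ζ) - h (adds x ζ))^2)) := by
          rw [eflat1, eflat2]
  -- assemble part 2
  have hSQeq : ∑ ζ ∈ configs S (N-1), ∑ x, ∑ y,
      V ζ * ρ x y * (h (adds y ζ) - h (adds x ζ))^2
      = (∑ ζ ∈ configs S (N-1), ∑ x, ∑ y, V ζ * ρ x y *
          ((hs (adds y ζ) - hs (adds x ζ)) * (h (adds y ζ) - h (adds x ζ))))
        - ∑ ζ ∈ configs S (N-1), ∑ x, ∑ y, V ζ *
            (c x y * (hs (adds x ζ) * (h (adds y ζ) - h (adds x ζ)))) := by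
    linarith [hsh_plus, hsh_minus, hpair_hs]
  have hXY : ∑ ζ ∈ configs S (N-1), ∑ x, ∑ y,
      V ζ * ρ x y * (h (adds y ζ) - h (adds x ζ))^2
      ≤ (Real.sqrt (∑ ζ ∈ configs S (N-1), ∑ x, ∑ y,
            V ζ * ρ x y * (hs (adds y ζ) - hs (adds x ζ))^2) *
          Real.sqrt (∑ ζ ∈ configs S (N-1), ∑ x, ∑ y,
            V ζ * ρ x y * (h (adds y ζ) - h (adds x ζ))^2))
        + Csec * (Real.sqrt (∑ ζ ∈ configs S (N-1), ∑ x, ∑ y,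
            V ζ * ρ x y * (hs (adds y ζ) - hs (adds x ζ))^2) *
          Real.sqrt (∑ ζ ∈ configs S (N-1), ∑ x, ∑ y,
            V ζ * ρ x y * (h (adds y ζ) - h (adds x ζ))^2)) := by
    have hnegabs := neg_abs_le (∑ ζ ∈ configs S (N-1), ∑ x, ∑ y, V ζ *
      (c x y * (hs (adds x ζ) * (h (adds y ζ) - h (adds x ζ)))))
    linarith [hCR, hCT, hnegabs, hSQeq]
  have hb2 : (Real.sqrt (∑ ζ ∈ configs S (N-1), ∑ x, ∑ y,
      V ζ * ρ x y * (h (adds y ζ) - h (adds x ζ))^2))^2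
      = ∑ ζ ∈ configs S (N-1), ∑ x, ∑ y,
          V ζ * ρ x y * (h (adds y ζ) - h (adds x ζ))^2 := Real.sq_sqrt hSQh0
  have ha2 : (Real.sqrt (∑ ζ ∈ configs S (N-1), ∑ x, ∑ y,
      V ζ * ρ x y * (hs (adds y ζ) - hs (adds x ζ))^2))^2
      = ∑ ζ ∈ configs S (N-1), ∑ x, ∑ y,
          V ζ * ρ x y * (hs (adds y ζ) - hs (adds x ζ))^2 := Real.sq_sqrt hSQs0
  have ha0 : 0 ≤ Real.sqrt (∑ ζ ∈ configs S (N-1), ∑ x, ∑ y,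
      V ζ * ρ x y * (hs (adds y ζ) - hs (adds x ζ))^2) := Real.sqrt_nonneg _
  have hb0 : 0 ≤ Real.sqrt (∑ ζ ∈ configs S (N-1), ∑ x, ∑ y,
      V ζ * ρ x y * (h (adds y ζ) - h (adds x ζ))^2) := Real.sqrt_nonneg _
  set aa := Real.sqrt (∑ ζ ∈ configs S (N-1), ∑ x, ∑ y,
      V ζ * ρ x y * (hs (adds y ζ) - hs (adds x ζ))^2) with haadef
  set bb := Real.sqrt (∑ ζ ∈ configs S (N-1), ∑ x, ∑ y,
      V ζ * ρ x y * (h (adds y ζ) - h (adds x ζ))^2) with hbbdef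
  rw [hdir hs, hdir h, ← ha2, ← hb2]
  rw [← hb2] at hXY
  nlinarith [sq_nonneg (bb - (1 + Csec) * aa), hXY, ha0, hb0, hCpos.le,
    mul_nonneg ha0 hb0]
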